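/- arXiv:1801.09181 — 2 statements merged into one kernel-verified Lean document; each statement's English description precedes it below -/
import Mathlib

section
/- For any complex number z with cos(z) ≠ 0 and any odd positive integer N, cos(Nz)/cos(z) = (-1)^((N-1)/2) · Σ'' i^j exp(-ijz), where the sum Σ'' is over j = -(N-1), -(N-3), ..., N-3, N-1. -/
open Complex Finset

theorem cos_ratio_sum (N : ℕ) (hN : Odd N) (z : ℂ) (hz : Complex.cos z ≠ 0) :
    Complex.cos ((N : ℂ) * z) / Complex.cos z =
      (-1 : ℂ) ^ ((N - 1) / 2) *
        ∑ k ∈ Finset.range N,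
          Complex.I ^ (2 * (k : ℤ) - ((N : ℤ) - 1)) *
            Complex.exp (-(Complex.I * ((2 * (k : ℂ) - ((N : ℂ) - 1)) * z))) := by
  obtain ⟨m, rfl⟩ := hN
  set a : ℂ := Complex.exp (-(Complex.I * z)) with ha_def
  have ha : a ≠ 0 := Complex.exp_ne_zero _
  -- key cosine identities
  have hcos : ∀ w : ℂ, Complex.exp (-(Complex.I * w)) ^ 2 + 1 =
      2 * Complex.exp (-(Complex.I * w)) * Complex.cos w := by
    intro w
    have h : Complex.exp (-(Complex.I*w)) * Complex.exp (Complex.I*w) = 1 := by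
      rw [← Complex.exp_add]; simp
    rw [Complex.cos, show w * Complex.I = Complex.I * w by ring,
      show -w * Complex.I = -(Complex.I * w) by ring]
    linear_combination -h
  have h1 : a ^ 2 + 1 = 2 * a * Complex.cos z := hcos z
  have h1' : a ^ 2 + 1 ≠ 0 := by
    rw [h1]; exact mul_ne_zero (mul_ne_zero two_ne_zero ha) hz
  have haN : a ^ (2*m+1) = Complex.exp (-(Complex.I * (((2*m+1 : ℕ) : ℂ) * z))) := by
    rw [ha_def, ← Complex.exp_nat_mul]
    congr 1
    push_cast
    ring
  have h2 : (a ^ (2*m+1)) ^ 2 + 1 =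
      2 * a ^ (2*m+1) * Complex.cos (((2*m+1 : ℕ) : ℂ) * z) := by
    rw [haN]; exact hcos _
  -- rewrite each term of the sum
  have hterm : ∀ k ∈ Finset.range (2*m+1),
      Complex.I ^ (2 * (k : ℤ) - (((2*m+1 : ℕ) : ℤ) - 1)) *
        Complex.exp (-(Complex.I * ((2 * (k : ℂ) - (((2*m+1 : ℕ) : ℂ) - 1)) * z))) =
      (-(a^2)) ^ (k : ℤ) / (-(a^2)) ^ (m : ℤ) := by
    intro k _
    have e1 : (2 * (k : ℤ) - (((2*m+1 : ℕ) : ℤ) - 1)) = 2 * ((k : ℤ) - m) := by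
      push_cast; ring
    have e2 : Complex.exp (-(Complex.I * ((2 * (k : ℂ) - (((2*m+1 : ℕ) : ℂ) - 1)) * z))) =
        Complex.exp (-(Complex.I * z)) ^ (2 * ((k:ℤ) - m)) := by
      rw [← Complex.exp_int_mul]
      congr 1
      push_cast
      ring
    rw [e1, e2, ← ha_def]
    have e3 : Complex.I ^ (2 * ((k:ℤ) - m)) = (-1 : ℂ) ^ ((k:ℤ) - m) := by
      rw [zpow_mul, show Complex.I ^ (2:ℤ) = -1 by rw [zpow_two, Complex.I_mul_I]]
    have e4 : a ^ (2 * ((k:ℤ) - m)) = (a^2) ^ ((k:ℤ) - m) := by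
      rw [zpow_mul]
      congr 1
    rw [e3, e4, ← mul_zpow]
    rw [show (-1 : ℂ) * a^2 = -(a^2) by ring]
    rw [zpow_sub₀ (by simpa using pow_ne_zero 2 ha : -(a^2) ≠ 0)]
  rw [Finset.sum_congr rfl hterm]
  have hx1 : -(a^2) ≠ 1 := by
    intro h
    apply h1'
    rw [← h]; ring
  rw [← Finset.sum_div]
  have hgeom : ∑ k ∈ Finset.range (2*m+1), (-(a^2)) ^ (k : ℤ) =
      ((a ^ (2*m+1))^2 + 1) / (a^2 + 1) := by
    have := geom_sum_eq hx1 (2*m+1)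
    calc ∑ k ∈ Finset.range (2*m+1), (-(a^2)) ^ (k : ℤ)
        = ∑ k ∈ Finset.range (2*m+1), (-(a^2)) ^ k := by
          apply Finset.sum_congr rfl; intro k _; exact zpow_natCast _ k
      _ = ((-(a^2)) ^ (2*m+1) - 1) / ((-(a^2)) - 1) := this
      _ = ((a ^ (2*m+1))^2 + 1) / (a^2 + 1) := by
          rw [show (-(a^2)) ^ (2*m+1) = -((a^2) ^ (2*m+1)) by
            rw [neg_pow]; simp [pow_succ, pow_mul]]
          rw [← pow_mul, show 2*(2*m+1) = (2*m+1)*2 by ring, pow_mul]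
          rw [div_eq_div_iff (by intro h; apply hx1; linear_combination h) h1']
          ring
  rw [hgeom]
  have hm : (2*m+1-1)/2 = m := by omega
  rw [hm]
  have ham : (-(a^2)) ^ (m : ℤ) = (-1:ℂ)^m * a^(2*m) := by
    rw [zpow_natCast, neg_pow, pow_mul]
  rw [ham, h1, h2]
  have hne : (2:ℂ) * a * Complex.cos z ≠ 0 := mul_ne_zero (mul_ne_zero two_ne_zero ha) hz
  have hneg : ((-1:ℂ)^m) ≠ 0 := pow_ne_zero m (by norm_num)
  field_simp
  ring_nf
end

section
/- For any complex number z with cos(z) ≠ 0 and any even positive integer N, sin(Nz)/cos(z) = (-1)^(N/2) · Σ'' i^j exp(ijz), where the sum Σ'' is over j = -(N-1), -(N-3), ..., N-3, N-1. -/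
open Complex Finset

theorem sin_over_cos_sum (N : ℕ) (hN : Even N) (hNpos : 0 < N) (z : ℂ)
    (hz : Complex.cos z ≠ 0) :
    Complex.sin ((N : ℂ) * z) / Complex.cos z =
      (-1 : ℂ) ^ (N / 2) *
        ∑ k ∈ Finset.range N,
          Complex.I ^ (2 * (k : ℤ) - ((N : ℤ) - 1)) *
            Complex.exp (Complex.I * ((2 * (k : ℂ) - ((N : ℂ) - 1)) * z)) := by
  obtain ⟨M, rfl⟩ := hN
  set w : ℂ := Complex.exp (z * Complex.I) with hw
  have hw0 : w ≠ 0 := Complex.exp_ne_zero _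
  set u : ℂ := Complex.I * w with hu
  have hu0 : u ≠ 0 := mul_ne_zero Complex.I_ne_zero hw0
  have hu2w : u ^ 2 = -w ^ 2 := by rw [hu, mul_pow, Complex.I_sq]; ring
  have hcos : Complex.cos z = (w ^ 2 + 1) / (2 * w) := by
    simp only [Complex.cos, hw, ← Complex.exp_add]
    rw [show -z * Complex.I = (z * Complex.I) - (z * Complex.I + z * Complex.I) by ring,
      Complex.exp_sub, Complex.exp_add]
    field_simp
  have hw2 : w ^ 2 + 1 ≠ 0 := by
    intro h
    apply hz
    rw [hcos, h, zero_div]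
  have hu2 : u ^ 2 ≠ 1 := by
    intro h
    apply hw2
    have : -w ^ 2 = 1 := by rw [← hu2w, h]
    linear_combination -this
  have hsin : Complex.sin (((M + M : ℕ) : ℂ) * z) = ((w ^ (M + M))⁻¹ - w ^ (M + M)) * Complex.I / 2 := by
    simp only [Complex.sin]
    rw [show -(((M + M : ℕ) : ℂ) * z) * Complex.I = -(((M + M : ℕ) : ℂ) * (z * Complex.I)) by ring,
      Complex.exp_neg, Complex.exp_nat_mul,
      show (((M + M : ℕ) : ℂ) * z) * Complex.I = ((M + M : ℕ) : ℂ) * (z * Complex.I) by ring,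
      Complex.exp_nat_mul]
  have hterm : ∀ k ∈ Finset.range (M + M),
      Complex.I ^ (2 * (k : ℤ) - (((M + M : ℕ) : ℤ) - 1)) *
        Complex.exp (Complex.I * ((2 * (k : ℂ) - (((M + M : ℕ) : ℂ) - 1)) * z))
      = (u ^ 2) ^ k * u ^ (1 - ((M + M : ℕ) : ℤ)) := by
    intro k _
    have h1 : (2 * (k : ℂ) - (((M + M : ℕ) : ℂ) - 1)) =
        ((2 * (k : ℤ) - (((M + M : ℕ) : ℤ) - 1) : ℤ) : ℂ) := by push_cast; ring
    rw [h1, show Complex.I * (((2 * (k : ℤ) - (((M + M : ℕ) : ℤ) - 1) : ℤ) : ℂ) * z) =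
        ((2 * (k : ℤ) - (((M + M : ℕ) : ℤ) - 1) : ℤ) : ℂ) * (z * Complex.I) by ring,
      Complex.exp_int_mul, ← hw, ← mul_zpow, ← hu]
    rw [show (2 * (k : ℤ) - (((M + M : ℕ) : ℤ) - 1)) = 2 * (k : ℤ) + (1 - ((M + M : ℕ) : ℤ)) by ring,
      zpow_add₀ hu0, zpow_mul,
      show ((2:ℤ)) = ((2:ℕ):ℤ) from rfl, zpow_natCast, zpow_natCast]
  rw [Finset.sum_congr rfl hterm, ← Finset.sum_mul, geom_sum_eq hu2]
  have hIN : Complex.I ^ (M + M) = (-1 : ℂ) ^ M := by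
    rw [← two_mul, pow_mul, Complex.I_sq]
  have hM2 : (M + M) / 2 = M := by omega
  have hneg : ((-1 : ℂ)) ^ M ≠ 0 := pow_ne_zero _ (by norm_num)
  have hu1N : u ^ (1 - ((M + M : ℕ) : ℤ)) = Complex.I * w / ((-1 : ℂ) ^ M * w ^ (M + M)) := by
    rw [zpow_sub₀ hu0, zpow_one, zpow_natCast, hu, mul_pow, hIN]
  have hupow : (u ^ 2) ^ (M + M) = (w ^ (M + M)) ^ 2 := by
    rw [hu2w, neg_pow, Even.neg_one_pow ⟨M, rfl⟩, one_mul, ← pow_mul, ← pow_mul]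
    ring_nf
  rw [div_eq_iff hz, hsin, hcos, hupow, hu1N, hM2, hu2w]
  have hwN : w ^ (M + M) ≠ 0 := pow_ne_zero _ hw0
  have h2 : (-w ^ 2 - 1) ≠ 0 := by intro h; apply hw2; linear_combination -h
  field_simp
  ring_nf
end
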